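/- Let $B:[0,1]\to M_2(\mathbb{C})$ and $a:[0,1]\to\mathbb{C}$ be continuous. For $t>0$ set $D_t(s)=B(s)+t\,\mathrm{diag}(a(s),-a(s))$, and let $f_t:[0,1]\to M_2(\mathbb{C})$ be differentiable with $f_t'(s)=-D_t(s)\,f_t(s)$ for all $s\in[0,1]$ and $f_t(0)=I_2$. Then there exists a constant $C>0$, independent of $t$, such that for every $t>0$: $\log\|f_t(1)\|\le t\int_0^1|\mathrm{Re}\,a(s)|\,ds+C$, where $\|\cdot\|$ is the $L^2$-operator norm on $M_2(\mathbb{C})$. -/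

import Mathlib

open scoped Matrix Matrix.Norms.L2Operator
open Set Complex ComplexConjugate

lemma key_ineq (b00 b01 b10 b11 z u0 u1 : ℂ) (t : ℝ) (ht : 0 ≤ t) :
    (-(((b00 + t*z)*u0 + b01*u1) * (starRingEnd ℂ) u0)).re
      + (-((b10*u0 + (b11 - t*z)*u1) * (starRingEnd ℂ) u1)).re
    ≤ (‖b00‖+‖b01‖+‖b10‖+‖b11‖ + t*|z.re|) * (normSq u0 + normSq u1) := by
  set X : ℂ := -(b00*(u0*conj u0) + b01*(u1*conj u0) + b10*(u0*conj u1) + b11*(u1*conj u1))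
    with hX
  have hsplit : (-(((b00 + t*z)*u0 + b01*u1) * conj u0)).re
      + (-((b10*u0 + (b11 - t*z)*u1) * conj u1)).re
      = X.re + t * z.re * (normSq u1 - normSq u0) := by
    have h0 : u0 * conj u0 = (normSq u0 : ℂ) := Complex.mul_conj u0
    have h1 : u1 * conj u1 = (normSq u1 : ℂ) := Complex.mul_conj u1
    have : (-(((b00 + t*z)*u0 + b01*u1) * conj u0)) + (-((b10*u0 + (b11 - t*z)*u1) * conj u1))
        = X + (t*z*(normSq u1) - t*z*(normSq u0)) := by
      rw [hX]; rw [mul_comm u0 (conj u0), mul_comm u1 (conj u1)] at *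
      rw [← h0, ← h1]; ring
    have h2 := congrArg Complex.re this
    simp only [Complex.add_re, Complex.sub_re] at h2
    rw [h2]
    simp [Complex.mul_re, Complex.ofReal_re, Complex.ofReal_im]
    ring
  set A0 := ‖u0‖
  set A1 := ‖u1‖
  have hn0 : normSq u0 = A0^2 := (Complex.sq_norm u0).symm
  have hn1 : normSq u1 = A1^2 := (Complex.sq_norm u1).symm
  have hA0 : 0 ≤ A0 := norm_nonneg u0
  have hA1 : 0 ≤ A1 := norm_nonneg u1
  have hXre : X.re ≤ (‖b00‖+‖b01‖+‖b10‖+‖b11‖) * (A0^2 + A1^2) := by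
    have h1 : X.re ≤ ‖X‖ := Complex.re_le_norm X
    have h2 : ‖X‖ ≤ ‖b00‖*(A0*A0) + ‖b01‖*(A1*A0) + ‖b10‖*(A0*A1) + ‖b11‖*(A1*A1) := by
      rw [hX]
      rw [norm_neg]
      calc ‖b00*(u0*conj u0) + b01*(u1*conj u0) + b10*(u0*conj u1) + b11*(u1*conj u1)‖
          ≤ ‖b00*(u0*conj u0)‖ + ‖b01*(u1*conj u0)‖
            + ‖b10*(u0*conj u1)‖ + ‖b11*(u1*conj u1)‖ := by
            apply le_trans (norm_add_le _ _)
            gcongr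
            apply le_trans (norm_add_le _ _)
            gcongr
            exact norm_add_le _ _
      _ = _ := by
            simp [norm_mul, Complex.norm_conj, A0, A1]
    have h3 : A1*A0 ≤ A0^2 + A1^2 := by nlinarith [sq_nonneg (A0 - A1)]
    have h4 : A0*A0 ≤ A0^2 + A1^2 := by nlinarith
    have h5 : A1*A1 ≤ A0^2 + A1^2 := by nlinarith
    have hb0 : (0:ℝ) ≤ ‖b00‖ := norm_nonneg _
    have hb1 : (0:ℝ) ≤ ‖b01‖ := norm_nonneg _
    have hb2 : (0:ℝ) ≤ ‖b10‖ := norm_nonneg _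
    have hb3 : (0:ℝ) ≤ ‖b11‖ := norm_nonneg _
    nlinarith [mul_le_mul_of_nonneg_left h4 hb0, mul_le_mul_of_nonneg_left h3 hb1,
      mul_le_mul_of_nonneg_left h3 hb2, mul_le_mul_of_nonneg_left h5 hb3]
  have hY : t * z.re * (A1^2 - A0^2) ≤ t * |z.re| * (A0^2 + A1^2) := by
    have : z.re * (A1^2 - A0^2) ≤ |z.re| * (A0^2 + A1^2) := by
      have := abs_mul z.re (A1^2 - A0^2)
      have h6 : |A1^2 - A0^2| ≤ A0^2 + A1^2 := by
        rw [abs_le]; constructor <;> nlinarith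
      nlinarith [le_abs_self (z.re * (A1^2 - A0^2)), abs_nonneg z.re]
    nlinarith
  rw [hsplit, hn0, hn1]
  linarith

lemma hasDeriv_normSq {u : ℝ → ℂ} {u' : ℂ} {s₀ : ℝ} {S : Set ℝ}
    (h : HasDerivWithinAt u u' S s₀) :
    HasDerivWithinAt (fun s => Complex.normSq (u s)) (2 * (u' * conj (u s₀)).re) S s₀ := by
  have hc : HasDerivWithinAt (fun s => conj (u s)) (conj u') S s₀ :=
    Complex.conjCLE.hasFDerivAt.comp_hasDerivWithinAt s₀ h
  have hm := h.mul hc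
  have hr := Complex.reCLM.hasFDerivAt.comp_hasDerivWithinAt s₀ hm
  have hval : Complex.reCLM (u' * conj (u s₀) + u s₀ * conj u') = 2 * (u' * conj (u s₀)).re := by
    have : u s₀ * conj u' = conj (u' * conj (u s₀)) := by
      rw [map_mul, Complex.conj_conj, mul_comm]
    simp only [ContinuousLinearMap.coe_coe, Complex.reCLM_apply, Complex.add_re, this,
      Complex.conj_re]
    ring
  rw [hval] at hr
  exact hr.congr (fun s _ => by simp [Function.comp, Complex.mul_conj])
    (by simp [Function.comp, Complex.mul_conj])

noncomputable def entryCLM (i j : Fin 2) : Matrix (Fin 2) (Fin 2) ℂ →L[ℝ] ℂ :=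
  LinearMap.toContinuousLinearMap
    { toFun := fun M => M i j
      map_add' := fun _ _ => rfl
      map_smul' := fun _ _ => rfl }

@[simp] lemma entryCLM_apply (i j : Fin 2) (M : Matrix (Fin 2) (Fin 2) ℂ) :
    entryCLM i j M = M i j := rfl

lemma opnorm_le_cols (M : Matrix (Fin 2) (Fin 2) ℂ) :
    ‖M‖ ≤ Real.sqrt (normSq (M 0 0) + normSq (M 1 0))
        + Real.sqrt (normSq (M 0 1) + normSq (M 1 1)) := by
  rw [Matrix.cstar_norm_def]
  apply ContinuousLinearMap.opNorm_le_bound _ (by positivity)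
  intro x
  set c0 : EuclideanSpace ℂ (Fin 2) := (WithLp.equiv 2 _).symm ![M 0 0, M 1 0] with hc0
  set c1 : EuclideanSpace ℂ (Fin 2) := (WithLp.equiv 2 _).symm ![M 0 1, M 1 1] with hc1
  have hv : Matrix.toEuclideanCLM (𝕜 := ℂ) M x = x 0 • c0 + x 1 • c1 := by
    apply (WithLp.equiv 2 (Fin 2 → ℂ)).injective
    simp only [WithLp.equiv_apply]
    rw [Matrix.ofLp_toEuclideanCLM]
    funext i
    fin_cases i <;>
      simp [hc0, hc1, Matrix.toLin'_apply, Matrix.mulVec, dotProduct,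
        Fin.sum_univ_two, WithLp.equiv_symm_apply] <;> ring
  have h0 : ‖c0‖ = Real.sqrt (normSq (M 0 0) + normSq (M 1 0)) := by
    rw [EuclideanSpace.norm_eq]
    simp [hc0, Fin.sum_univ_two, Complex.sq_norm]
  have h1 : ‖c1‖ = Real.sqrt (normSq (M 0 1) + normSq (M 1 1)) := by
    rw [EuclideanSpace.norm_eq]
    simp [hc1, Fin.sum_univ_two, Complex.sq_norm]
  have hx0 : ‖x 0‖ ≤ ‖x‖ := by
    rw [EuclideanSpace.norm_eq, Fin.sum_univ_two]
    calc ‖x 0‖ = Real.sqrt (‖x 0‖^2) := (Real.sqrt_sq (norm_nonneg _)).symm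
    _ ≤ _ := Real.sqrt_le_sqrt (le_add_of_nonneg_right (by positivity))
  have hx1 : ‖x 1‖ ≤ ‖x‖ := by
    rw [EuclideanSpace.norm_eq, Fin.sum_univ_two]
    calc ‖x 1‖ = Real.sqrt (‖x 1‖^2) := (Real.sqrt_sq (norm_nonneg _)).symm
    _ ≤ _ := Real.sqrt_le_sqrt (le_add_of_nonneg_left (by positivity))
  calc ‖Matrix.toEuclideanCLM (𝕜 := ℂ) M x‖ = ‖x 0 • c0 + x 1 • c1‖ := by rw [hv]
  _ ≤ ‖x 0 • c0‖ + ‖x 1 • c1‖ := norm_add_le _ _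
  _ = ‖x 0‖ * ‖c0‖ + ‖x 1‖ * ‖c1‖ := by rw [norm_smul, norm_smul]
  _ ≤ ‖x‖ * ‖c0‖ + ‖x‖ * ‖c1‖ := by gcongr
  _ = _ := by rw [h0, h1]; ring

/-- With `D_t(s) = B(s) + t·diag(a(s), -a(s))` and `f_t` solving
`f_t' = -D_t f_t`, `f_t(0) = I₂`, there is a constant `C > 0` independent of `t` with
`log ‖f_t(1)‖ ≤ t ∫₀¹ |Re a(s)| ds + C` for all `t > 0`. -/
theorem ode_log_norm_bound
    (B : ℝ → Matrix (Fin 2) (Fin 2) ℂ) (hB : ContinuousOn B (Icc 0 1))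
    (a : ℝ → ℂ) (ha : ContinuousOn a (Icc 0 1))
    (f : ℝ → ℝ → Matrix (Fin 2) (Fin 2) ℂ)
    (hf : ∀ t > (0 : ℝ), ∀ s ∈ Icc (0 : ℝ) 1,
      HasDerivWithinAt (f t)
        (-((B s + (t : ℂ) • Matrix.diagonal ![a s, -a s]) * f t s)) (Icc 0 1) s)
    (hf0 : ∀ t > (0 : ℝ), f t 0 = 1) :
    ∃ C > (0 : ℝ), ∀ t > (0 : ℝ),
      Real.log ‖f t 1‖ ≤ t * (∫ s in (0 : ℝ)..1, |(a s).re|) + C := by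
  have h01 : (0:ℝ) ≤ 1 := zero_le_one
  -- entrywise continuity of B
  have hBij : ∀ i j : Fin 2, ContinuousOn (fun s => B s i j) (Icc 0 1) := fun i j =>
    (entryCLM i j).continuous.comp_continuousOn hB
  set bs : ℝ → ℝ := fun s => ‖B s 0 0‖ + ‖B s 0 1‖ + ‖B s 1 0‖ + ‖B s 1 1‖ with hbs
  have hbs_cont : ContinuousOn bs (Icc 0 1) :=
    (((hBij 0 0).norm.add (hBij 0 1).norm).add (hBij 1 0).norm).add (hBij 1 1).norm
  have hbs_nonneg : ∀ s, 0 ≤ bs s := fun s => by positivity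
  have hre_cont : ContinuousOn (fun s => |(a s).re|) (Icc 0 1) :=
    (Complex.continuous_re.comp_continuousOn ha).abs
  have hre_int : IntervalIntegrable (fun s => |(a s).re|) MeasureTheory.volume 0 1 :=
    ContinuousOn.intervalIntegrable (by rw [uIcc_of_le h01]; exact hre_cont)
  have hbs_int : IntervalIntegrable bs MeasureTheory.volume 0 1 :=
    ContinuousOn.intervalIntegrable (by rw [uIcc_of_le h01]; exact hbs_cont)
  set Ib : ℝ := ∫ s in (0:ℝ)..1, bs s with hIbdef
  have hIb0 : 0 ≤ Ib :=
    intervalIntegral.integral_nonneg h01 (fun u _ => hbs_nonneg u)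
  have hα0 : 0 ≤ ∫ s in (0:ℝ)..1, |(a s).re| :=
    intervalIntegral.integral_nonneg h01 (fun u _ => abs_nonneg _)
  refine ⟨Ib + 1, by linarith, ?_⟩
  intro t ht
  -- the weight function and its clamped extension
  set w : ℝ → ℝ := fun s => bs s + t * |(a s).re| with hwdef
  have hw_cont : ContinuousOn w (Icc 0 1) :=
    hbs_cont.add (continuousOn_const.mul hre_cont)
  set c : ℝ → ℝ := fun x => min 1 (max 0 x) with hcdef
  have hc_cont : Continuous c := continuous_const.min (continuous_const.max continuous_id)
  have hc_mem : ∀ x, c x ∈ Icc (0:ℝ) 1 :=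
    fun x => ⟨le_min h01 (le_max_left 0 x), min_le_left _ _⟩
  have hc_eq : ∀ s ∈ Icc (0:ℝ) 1, c s = s := fun s hs => by
    simp [hcdef, max_eq_right hs.1, min_eq_right hs.2]
  set wex : ℝ → ℝ := fun x => w (c x) with hwexdef
  have hwex_cont : Continuous wex := hw_cont.comp_continuous hc_cont hc_mem
  have hwex_eq : ∀ s ∈ Icc (0:ℝ) 1, wex s = w s := fun s hs => by
    show w (c s) = w s; rw [hc_eq s hs]
  set ψ : ℝ → ℝ := fun x => ∫ r in (0:ℝ)..x, wex r with hψdef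
  have hψ : ∀ x, HasDerivAt ψ (wex x) x := fun x =>
    (hwex_cont.integral_hasStrictDerivAt 0 x).hasDerivAt
  -- per-column bound
  have hcol : ∀ j : Fin 2,
      normSq (f t 1 0 j) + normSq (f t 1 1 j) ≤ Real.exp (2 * ψ 1) := by
    intro j
    set F : ℝ → ℝ := fun s => normSq (f t s 0 j) + normSq (f t s 1 j) with hFdef
    set G : ℝ → ℝ := fun s => Real.exp (-(2 * ψ s)) * F s with hGdef
    -- derivative of entries
    have hu : ∀ i : Fin 2, ∀ s ∈ Icc (0:ℝ) 1,
        HasDerivWithinAt (fun s => f t s i j)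
          ((-((B s + (t : ℂ) • Matrix.diagonal ![a s, -a s]) * f t s)) i j) (Icc 0 1) s :=
      fun i s hs => (entryCLM i j).hasFDerivAt.comp_hasDerivWithinAt s (hf t ht s hs)
    have hF : ∀ s ∈ Icc (0:ℝ) 1, HasDerivWithinAt F
        (2 * ((-((B s + (t : ℂ) • Matrix.diagonal ![a s, -a s]) * f t s)) 0 j
              * conj (f t s 0 j)).re
         + 2 * ((-((B s + (t : ℂ) • Matrix.diagonal ![a s, -a s]) * f t s)) 1 j
              * conj (f t s 1 j)).re) (Icc 0 1) s :=
      fun s hs => (hasDeriv_normSq (hu 0 s hs)).add (hasDeriv_normSq (hu 1 s hs))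
    -- the key pointwise inequality
    have hkey : ∀ s ∈ Icc (0:ℝ) 1,
        2 * ((-((B s + (t : ℂ) • Matrix.diagonal ![a s, -a s]) * f t s)) 0 j
              * conj (f t s 0 j)).re
         + 2 * ((-((B s + (t : ℂ) • Matrix.diagonal ![a s, -a s]) * f t s)) 1 j
              * conj (f t s 1 j)).re ≤ 2 * w s * F s := by
      intro s hs
      have d00 : Matrix.diagonal ![a s, -a s] 0 0 = a s := by
        rw [Matrix.diagonal_apply_eq]; rfl
      have d11 : Matrix.diagonal ![a s, -a s] 1 1 = -a s := by
        rw [Matrix.diagonal_apply_eq]; rfl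
      have d01 : Matrix.diagonal ![a s, -a s] 0 1 = 0 :=
        Matrix.diagonal_apply_ne _ (by decide)
      have d10 : Matrix.diagonal ![a s, -a s] 1 0 = 0 :=
        Matrix.diagonal_apply_ne _ (by decide)
      have e0 : (-((B s + (t : ℂ) • Matrix.diagonal ![a s, -a s]) * f t s)) 0 j
          = -(((B s 0 0 + t * a s) * f t s 0 j + B s 0 1 * f t s 1 j)) := by
        simp only [Matrix.neg_apply, Matrix.mul_apply, Fin.sum_univ_two, Matrix.add_apply,
          Matrix.smul_apply, d00, d01, smul_eq_mul, smul_zero, add_zero, zero_add, mul_zero]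
        try ring
      have e1 : (-((B s + (t : ℂ) • Matrix.diagonal ![a s, -a s]) * f t s)) 1 j
          = -((B s 1 0 * f t s 0 j + (B s 1 1 - t * a s) * f t s 1 j)) := by
        simp only [Matrix.neg_apply, Matrix.mul_apply, Fin.sum_univ_two, Matrix.add_apply,
          Matrix.smul_apply, d11, d10, smul_eq_mul, smul_zero, add_zero, zero_add, mul_zero]
        try ring
      have h := key_ineq (B s 0 0) (B s 0 1) (B s 1 0) (B s 1 1) (a s)
        (f t s 0 j) (f t s 1 j) t ht.le
      rw [e0, e1, neg_mul, neg_mul]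
      simp only [hwdef, hFdef, hbs]
      linarith [h]
    -- G is antitone
    have hG' : ∀ s ∈ Icc (0:ℝ) 1, HasDerivWithinAt G
        (Real.exp (-(2 * ψ s)) * (-(2 * wex s)) * F s
          + Real.exp (-(2 * ψ s)) *
            (2 * ((-((B s + (t : ℂ) • Matrix.diagonal ![a s, -a s]) * f t s)) 0 j
              * conj (f t s 0 j)).re
             + 2 * ((-((B s + (t : ℂ) • Matrix.diagonal ![a s, -a s]) * f t s)) 1 j
              * conj (f t s 1 j)).re)) (Icc 0 1) s := by
      intro s hs
      have hexp : HasDerivAt (fun x => Real.exp (-(2 * ψ x)))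
          (Real.exp (-(2 * ψ s)) * (-(2 * wex s))) s :=
        (((hψ s).const_mul 2).neg).exp
      exact (hexp.hasDerivWithinAt).mul (hF s hs)
    have hGanti : AntitoneOn G (Icc 0 1) := by
      apply antitoneOn_of_deriv_nonpos (convex_Icc 0 1)
      · exact fun s hs => ((hG' s hs).continuousWithinAt)
      · intro x hx
        rw [interior_Icc] at hx
        exact (((hG' x ⟨hx.1.le, hx.2.le⟩).hasDerivAt
          (Icc_mem_nhds hx.1 hx.2)).differentiableAt).differentiableWithinAt
      · intro x hx
        rw [interior_Icc] at hx
        have hx' : x ∈ Icc (0:ℝ) 1 := ⟨hx.1.le, hx.2.le⟩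
        rw [((hG' x hx').hasDerivAt (Icc_mem_nhds hx.1 hx.2)).deriv]
        have hF_nonneg : 0 ≤ F x :=
          add_nonneg (Complex.normSq_nonneg _) (Complex.normSq_nonneg _)
        have h1 := hkey x hx'
        rw [hwex_eq x hx']
        have hepos : 0 < Real.exp (-(2 * ψ x)) := Real.exp_pos _
        nlinarith [h1, hepos.le, mul_le_mul_of_nonneg_left h1 hepos.le]
    have hG10 : G 1 ≤ G 0 := hGanti (left_mem_Icc.mpr h01) (right_mem_Icc.mpr h01) h01
    have hG0 : G 0 = 1 := by
      have hψ0 : ψ 0 = 0 := intervalIntegral.integral_same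
      have hf00 : f t 0 = 1 := hf0 t ht
      rw [hGdef]
      simp only [hψ0, mul_zero, neg_zero, Real.exp_zero, one_mul, hFdef, hf00]
      fin_cases j <;> simp [Matrix.one_apply]
    have h11 : G 1 ≤ 1 := hG0 ▸ hG10
    calc F 1 = Real.exp (2 * ψ 1) * G 1 := by
          simp only [hGdef]; rw [← mul_assoc, ← Real.exp_add]; simp
    _ ≤ Real.exp (2 * ψ 1) * 1 := mul_le_mul_of_nonneg_left h11 (Real.exp_pos _).le
    _ = Real.exp (2 * ψ 1) := mul_one _
  -- combine columns
  have hnorm : ‖f t 1‖ ≤ 2 * Real.exp (ψ 1) := by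
    have h := opnorm_le_cols (f t 1)
    rw [show (2 : ℝ) * ψ 1 = ψ 1 + ψ 1 by ring, Real.exp_add] at hcol
    have hs0 : Real.sqrt (normSq (f t 1 0 0) + normSq (f t 1 1 0)) ≤ Real.exp (ψ 1) :=
      calc Real.sqrt (normSq (f t 1 0 0) + normSq (f t 1 1 0))
          ≤ Real.sqrt (Real.exp (ψ 1) * Real.exp (ψ 1)) := Real.sqrt_le_sqrt (hcol 0)
      _ = Real.exp (ψ 1) := Real.sqrt_mul_self (Real.exp_pos _).le
    have hs1 : Real.sqrt (normSq (f t 1 0 1) + normSq (f t 1 1 1)) ≤ Real.exp (ψ 1) :=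
      calc Real.sqrt (normSq (f t 1 0 1) + normSq (f t 1 1 1))
          ≤ Real.sqrt (Real.exp (ψ 1) * Real.exp (ψ 1)) := Real.sqrt_le_sqrt (hcol 1)
      _ = Real.exp (ψ 1) := Real.sqrt_mul_self (Real.exp_pos _).le
    linarith
  -- compute ψ 1
  have hψ1 : ψ 1 = Ib + t * ∫ s in (0:ℝ)..1, |(a s).re| := by
    have h1 : (∫ r in (0:ℝ)..1, wex r) = ∫ r in (0:ℝ)..1, w r :=
      intervalIntegral.integral_congr (fun s hs => hwex_eq s (by rwa [uIcc_of_le h01] at hs))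
    show (∫ r in (0:ℝ)..1, wex r) = _
    rw [h1]
    show (∫ r in (0:ℝ)..1, bs r + t * |(a r).re|) = _
    rw [intervalIntegral.integral_add hbs_int (hre_int.const_mul t),
      intervalIntegral.integral_const_mul, hIbdef]
  -- conclude
  rcases eq_or_lt_of_le (norm_nonneg (f t 1)) with hz | hz
  · rw [← hz, Real.log_zero]
    have : 0 ≤ t * ∫ s in (0:ℝ)..1, |(a s).re| := mul_nonneg ht.le hα0
    linarith
  · calc Real.log ‖f t 1‖ ≤ Real.log (2 * Real.exp (ψ 1)) := Real.log_le_log hz hnorm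
    _ = Real.log 2 + ψ 1 := by
        rw [Real.log_mul two_ne_zero (Real.exp_ne_zero _), Real.log_exp]
    _ ≤ 1 + ψ 1 := by
        have := Real.log_two_lt_d9; linarith
    _ = t * (∫ s in (0 : ℝ)..1, |(a s).re|) + (Ib + 1) := by rw [hψ1]; ring
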